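/- Suppose (Q,V) is a tensor G-stable pair: V is a kG-submodule of the kN-module Q, and there is a nonzero finite dimensional k[G/N]-module Y such that Q ⊗ Y is a kG-module extending the N-action, with V ⊗ Y a G-submodule. Then (Q,V) is numerically G-stable: there is a kG-module M = Q ⊕ R with R ≅ Q^{⊕(n-1)} as kN-modules (n = dim(Y ⊗ Y*)) and V is a G-submodule of M contained in the summand Q. -/

import Mathlib

open scoped TensorProduct
open Module

section helpers

variable {k : Type*} [Field k]

lemma unit_apply_inv_apply {M : Type*} [AddCommGroup M] [Module k M]
    (u : (M →ₗ[k] M)ˣ) (x : M) : u.1 ((↑u⁻¹ : M →ₗ[k] M) x) = x := by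
  rw [← Module.End.mul_apply, Units.mul_inv, Module.End.one_apply]

lemma unit_inv_apply_apply {M : Type*} [AddCommGroup M] [Module k M]
    (u : (M →ₗ[k] M)ˣ) (x : M) : (↑u⁻¹ : M →ₗ[k] M) (u.1 x) = x := by
  rw [← Module.End.mul_apply, Units.inv_mul, Module.End.one_apply]

/-- `F ↦ a ∘ F ∘ s` as a linear endomorphism of `Hom(M, M')`. -/
def compL {M M' : Type*} [AddCommGroup M] [Module k M] [AddCommGroup M'] [Module k M']
    (a : M' →ₗ[k] M') (s : M →ₗ[k] M) : (M →ₗ[k] M') →ₗ[k] (M →ₗ[k] M') where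
  toFun F := a ∘ₗ F ∘ₗ s
  map_add' F G := by ext y; simp
  map_smul' c F := by ext y; simp

@[simp] lemma compL_apply {M M' : Type*} [AddCommGroup M] [Module k M] [AddCommGroup M']
    [Module k M'] (a : M' →ₗ[k] M') (s : M →ₗ[k] M) (F : M →ₗ[k] M') (y : M) :
    compL a s F y = a (F (s y)) := rfl

/-- conjugation of unit groups of endomorphism rings by a linear equivalence. -/
def conjUnits {M M' : Type*} [AddCommGroup M] [Module k M] [AddCommGroup M'] [Module k M']
    (e : M ≃ₗ[k] M') : (M →ₗ[k] M)ˣ →* (M' →ₗ[k] M')ˣ where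
  toFun u :=
    { val := e.toLinearMap ∘ₗ u.1 ∘ₗ e.symm.toLinearMap
      inv := e.toLinearMap ∘ₗ (↑u⁻¹ : M →ₗ[k] M) ∘ₗ e.symm.toLinearMap
      val_inv := by
        ext x
        simp [Module.End.mul_apply, unit_apply_inv_apply]
      inv_val := by
        ext x
        simp [Module.End.mul_apply, unit_inv_apply_apply] }
  map_one' := by ext x; simp
  map_mul' u v := by ext x; simp [Units.val_mul, Module.End.mul_apply]

@[simp] lemma conjUnits_apply {M M' : Type*} [AddCommGroup M] [Module k M] [AddCommGroup M']
    [Module k M'] (e : M ≃ₗ[k] M') (u : (M →ₗ[k] M)ˣ) (x : M') :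
    (conjUnits e u).1 x = e (u.1 (e.symm x)) := rfl

end helpers

/-- The key linear-algebra fact. -/
theorem exists_good_equiv (k : Type*) [Field k] (Q : Type*) [AddCommGroup Q] [Module k Q]
    (Y : Type*) [AddCommGroup Y] [Module k Y] [FiniteDimensional k Y] [Nontrivial Y] :
    ∃ Φ : (Y →ₗ[k] (Q ⊗[k] Y)) ≃ₗ[k]
        (Q × (Fin (finrank k Y * finrank k Y - 1) → Q)),
      (∀ (A : Q →ₗ[k] Q) (F : Y →ₗ[k] (Q ⊗[k] Y)),
        Φ ((A.rTensor Y) ∘ₗ F) = (A (Φ F).1, fun i => A ((Φ F).2 i))) ∧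
      (∀ v : Q, Φ (TensorProduct.mk k Q Y v) = (v, 0)) := by
  classical
  set d := finrank k Y with hdd
  have hd : 0 < d := finrank_pos
  set m := d * d - 1 with hmm
  have hm : d * d = m + 1 := (Nat.succ_pred_eq_of_pos (Nat.mul_pos hd hd)).symm
  let b : Basis (Fin d) k Y := finBasis k Y
  -- the scalar function space and its basis containing the identity pattern
  let I : (Fin d × Fin d) → k := fun p => if p.1 = p.2 then 1 else 0
  have hI : I ≠ 0 := by
    intro h
    have := congrFun h (⟨0, hd⟩, ⟨0, hd⟩)
    rw [Pi.zero_apply] at this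
    simp [I] at this
  have hli : LinearIndependent k (fun x : ({I} : Set ((Fin d × Fin d) → k)) => (x : (Fin d × Fin d) → k)) :=
    (linearIndepOn_singleton_iff (R := k) (v := id)).2 hI
  let B := Module.Basis.extend hli
  haveI : Fintype ↥(LinearIndepOn.extend (v := id) hli (Set.subset_univ _)) := FiniteDimensional.fintypeBasisIndex B
  have hcard : Fintype.card ↥(LinearIndepOn.extend (v := id) hli (Set.subset_univ _)) = m + 1 := by
    have h1 : finrank k ((Fin d × Fin d) → k) = Fintype.card ↥(LinearIndepOn.extend (v := id) hli (Set.subset_univ _)) :=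
      finrank_eq_card_basis B
    have h2 : finrank k ((Fin d × Fin d) → k) = d * d := by
      simp [finrank_pi]
    omega
  let idx : ↥(LinearIndepOn.extend (v := id) hli (Set.subset_univ _)) :=
    ⟨I, LinearIndepOn.subset_extend (v := id) hli _ (Set.mem_singleton I)⟩
  let e0 := Fintype.equivFinOfCardEq hcard
  let e := e0.trans (Equiv.swap (e0 idx) 0)
  let C : Basis (Fin (m + 1)) k ((Fin d × Fin d) → k) := B.reindex e
  have hC0 : C 0 = I := by
    have h1 : e idx = 0 := by simp [e, Equiv.swap_apply_left]
    have h2 : e.symm 0 = idx := by rw [Equiv.symm_apply_eq]; exact h1.symm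
    rw [Module.Basis.reindex_apply, h2]
    exact Module.Basis.extend_apply_self hli idx
  let D : Fin (m + 1) → (Fin d × Fin d) → k := fun r p =>
    C.repr (Pi.single p (1 : k) : (Fin d × Fin d) → k) r
  -- delta expansion
  have Ldelta : ∀ s : (Fin d × Fin d) → k,
      (∑ p : Fin d × Fin d, s p • (Pi.single p (1 : k) : (Fin d × Fin d) → k)) = s := by
    intro s
    have h : ∀ p : Fin d × Fin d, s p • (Pi.single p (1 : k) : (Fin d × Fin d) → k) = Pi.single p (s p) := by
      intro p; rw [← Pi.single_smul, smul_eq_mul, mul_one]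
    simp_rw [h]
    exact Finset.univ_sum_single s
  -- scalar identities
  have hα : ∀ (p q : Fin d × Fin d), (∑ r, D r p * C r q) = if q = p then 1 else 0 := by
    intro p q
    have h := C.sum_repr ((Pi.single p (1 : k) : (Fin d × Fin d) → k))
    have := congrFun h q
    simpa [D, Finset.sum_apply, Pi.single_apply] using this
  have hβ : ∀ (r r' : Fin (m + 1)), (∑ p, D r p * C r' p) = if r' = r then 1 else 0 := by
    intro r r'
    have h1 : (∑ p : Fin d × Fin d, C r' p • (Pi.single p (1 : k) : (Fin d × Fin d) → k)) = C r' := Ldelta (C r')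
    have h2 : C.repr (∑ p : Fin d × Fin d, C r' p • (Pi.single p (1 : k) : (Fin d × Fin d) → k)) r
        = C.repr (C r') r := by rw [h1]
    rw [map_sum] at h2
    simp only [map_smul] at h2
    rw [C.repr_self, Finsupp.single_apply, Finset.sum_apply'] at h2
    simp only [Finsupp.smul_apply, smul_eq_mul] at h2
    calc (∑ p, D r p * C r' p)
        = ∑ p : Fin d × Fin d, C r' p * D r p := by
          exact Finset.sum_congr rfl fun p _ => mul_comm _ _
      _ = if r' = r then 1 else 0 := h2
  -- coordinates of Q ⊗ Y
  let φ : Fin d → (Q ⊗[k] Y →ₗ[k] Q) := fun i =>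
    (TensorProduct.rid k Q).toLinearMap ∘ₗ LinearMap.lTensor Q (b.coord i)
  have hφ : ∀ (i : Fin d) (q : Q) (y : Y), φ i (q ⊗ₜ[k] y) = b.repr y i • q := by
    intro i q y
    simp [φ, TensorProduct.rid_tmul, Basis.coord_apply]
  have hφA : ∀ (A : Q →ₗ[k] Q) (i : Fin d) (x : Q ⊗[k] Y),
      φ i (A.rTensor Y x) = A (φ i x) := by
    intro A i x
    induction x using TensorProduct.induction_on with
    | zero => simp
    | tmul q y => simp [hφ]
    | add x y hx hy => simp [hx, hy]
  have hsum : ∀ x : Q ⊗[k] Y, (∑ i, (φ i x) ⊗ₜ[k] b i) = x := by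
    intro x
    induction x using TensorProduct.induction_on with
    | zero => simp
    | tmul q y =>
      calc (∑ i, (φ i (q ⊗ₜ[k] y)) ⊗ₜ[k] b i) = ∑ i, q ⊗ₜ[k] (b.repr y i • b i) := by
            refine Finset.sum_congr rfl fun i _ => ?_
            rw [hφ, TensorProduct.smul_tmul, TensorProduct.tmul_smul]
        _ = q ⊗ₜ[k] y := by rw [← TensorProduct.tmul_sum, b.sum_repr]
    | add x y hx hy => simp [TensorProduct.add_tmul, Finset.sum_add_distrib, hx, hy]
  -- the coordinate equivalence
  let coordL : (Y →ₗ[k] (Q ⊗[k] Y)) →ₗ[k] ((Fin d × Fin d) → Q) :=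
    { toFun := fun F p => φ p.1 (F (b p.2))
      map_add' := fun F G => by funext p; simp
      map_smul' := fun c F => by funext p; simp }
  let invL : ((Fin d × Fin d) → Q) →ₗ[k] (Y →ₗ[k] (Q ⊗[k] Y)) :=
    { toFun := fun u => ∑ p : Fin d × Fin d, (b.coord p.2).smulRight (u p ⊗ₜ[k] b p.1)
      map_add' := fun u u' => by
        ext y
        simp [LinearMap.sum_apply, TensorProduct.add_tmul, smul_add, Finset.sum_add_distrib]
      map_smul' := fun c u => by
        ext y
        simp only [LinearMap.sum_apply, LinearMap.smulRight_apply, Pi.smul_apply,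
          RingHom.id_apply, LinearMap.smul_apply, Finset.smul_sum]
        refine Finset.sum_congr rfl fun p _ => ?_
        rw [← TensorProduct.smul_tmul', smul_comm] }
  have hinv1 : coordL ∘ₗ invL = LinearMap.id := by
    refine LinearMap.ext fun u => ?_
    funext p
    have hbp : invL u (b p.2) = ∑ p' : Fin d × Fin d,
        (if p.2 = p'.2 then (1:k) else 0) • (u p' ⊗ₜ[k] b p'.1) := by
      simp [invL, LinearMap.sum_apply, Basis.coord_apply, Basis.repr_self,
        Finsupp.single_apply, ite_smul, one_smul, zero_smul]
    simp only [LinearMap.comp_apply, LinearMap.id_apply]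
    show φ p.1 (invL u (b p.2)) = u p
    rw [hbp, map_sum]
    simp only [map_smul]
    rw [Fintype.sum_prod_type]
    simp [hφ, Basis.repr_self, Finsupp.single_apply, ite_smul, one_smul, zero_smul,
      smul_smul, Finset.sum_ite_eq, Finset.sum_ite_eq']
  
  have hinv2 : invL ∘ₗ coordL = LinearMap.id := by
    refine LinearMap.ext fun F => ?_
    refine b.ext fun j => ?_
    simp only [LinearMap.comp_apply, LinearMap.id_apply]
    show invL (coordL F) (b j) = F (b j)
    simp only [invL, coordL, LinearMap.coe_mk, AddHom.coe_mk, LinearMap.sum_apply,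
      LinearMap.smulRight_apply, Basis.coord_apply, Basis.repr_self, Finsupp.single_apply,
      ite_smul, one_smul, zero_smul]
    rw [Fintype.sum_prod_type]
    simp [Finset.sum_ite_eq, hsum (F (b j))]
  let coordEquiv : (Y →ₗ[k] (Q ⊗[k] Y)) ≃ₗ[k] ((Fin d × Fin d) → Q) :=
    LinearEquiv.ofLinear coordL invL hinv1 hinv2
  -- change of pattern
  let thetaL : ((Fin d × Fin d) → Q) →ₗ[k] (Fin (m + 1) → Q) :=
    { toFun := fun u r => ∑ p, D r p • u p
      map_add' := fun u u' => by funext r; simp [smul_add, Finset.sum_add_distrib]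
      map_smul' := fun c u => by
        funext r
        simp only [Pi.smul_apply, RingHom.id_apply, Finset.smul_sum]
        exact Finset.sum_congr rfl fun p _ => smul_comm _ _ _ }
  let thetaInv : (Fin (m + 1) → Q) →ₗ[k] ((Fin d × Fin d) → Q) :=
    { toFun := fun w p => ∑ r, C r p • w r
      map_add' := fun w w' => by funext p; simp [smul_add, Finset.sum_add_distrib]
      map_smul' := fun c w => by
        funext p
        simp only [Pi.smul_apply, RingHom.id_apply, Finset.smul_sum]
        exact Finset.sum_congr rfl fun r _ => smul_comm _ _ _ }
  have ht1 : thetaL ∘ₗ thetaInv = LinearMap.id := by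
    refine LinearMap.ext fun w => ?_
    funext r
    simp only [LinearMap.comp_apply, LinearMap.id_apply]
    show (∑ p, D r p • (∑ r', C r' p • w r')) = w r
    calc (∑ p, D r p • (∑ r', C r' p • w r'))
        = ∑ p, ∑ r', (D r p * C r' p) • w r' := by
          refine Finset.sum_congr rfl fun p _ => ?_
          rw [Finset.smul_sum]
          exact Finset.sum_congr rfl fun r' _ => smul_smul _ _ _
      _ = ∑ r', (∑ p, D r p * C r' p) • w r' := by
          rw [Finset.sum_comm]
          exact Finset.sum_congr rfl fun r' _ => (Finset.sum_smul).symm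
      _ = w r := by simp [hβ, ite_smul, one_smul, zero_smul, Finset.sum_ite_eq']
  have ht2 : thetaInv ∘ₗ thetaL = LinearMap.id := by
    refine LinearMap.ext fun u => ?_
    funext p
    simp only [LinearMap.comp_apply, LinearMap.id_apply]
    show (∑ r, C r p • (∑ p', D r p' • u p')) = u p
    calc (∑ r, C r p • (∑ p', D r p' • u p'))
        = ∑ r, ∑ p', (D r p' * C r p) • u p' := by
          refine Finset.sum_congr rfl fun r _ => ?_
          rw [Finset.smul_sum]
          refine Finset.sum_congr rfl fun p' _ => ?_
          rw [smul_smul, mul_comm]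
      _ = ∑ p', (∑ r, D r p' * C r p) • u p' := by
          rw [Finset.sum_comm]
          exact Finset.sum_congr rfl fun p' _ => (Finset.sum_smul).symm
      _ = u p := by simp [hα, ite_smul, one_smul, zero_smul, Finset.sum_ite_eq]
  let theta : ((Fin d × Fin d) → Q) ≃ₗ[k] (Fin (m + 1) → Q) :=
    LinearEquiv.ofLinear thetaL thetaInv ht1 ht2
  -- split off the first coordinate
  let split : (Fin (m + 1) → Q) ≃ₗ[k] (Q × (Fin m → Q)) :=
    { toFun := fun w => (w 0, fun i => w i.succ)
      map_add' := fun w w' => rfl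
      map_smul' := fun c w => rfl
      invFun := fun x => Fin.cons x.1 x.2
      left_inv := fun w => by
        funext i
        refine Fin.cases ?_ (fun j => ?_) i <;> simp
      right_inv := fun x => by simp }
  let Φ := coordEquiv.trans (theta.trans split)
  have hPhi : ∀ G : Y →ₗ[k] (Q ⊗[k] Y),
      Φ G = ((thetaL (coordL G)) 0, fun i => (thetaL (coordL G)) i.succ) := fun G => rfl
  have hcoordA : ∀ (A : Q →ₗ[k] Q) (F : Y →ₗ[k] (Q ⊗[k] Y)),
      coordL ((A.rTensor Y) ∘ₗ F) = fun p => A (coordL F p) := by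
    intro A F
    funext p
    show φ p.1 ((A.rTensor Y) (F (b p.2))) = A (φ p.1 (F (b p.2)))
    exact hφA A p.1 _
  have hthetaA : ∀ (A : Q →ₗ[k] Q) (u : (Fin d × Fin d) → Q),
      thetaL (fun p => A (u p)) = fun r => A (thetaL u r) := by
    intro A u
    funext r
    show (∑ p, D r p • A (u p)) = A (∑ p, D r p • u p)
    rw [map_sum]
    exact Finset.sum_congr rfl fun p _ => (map_smul A _ _).symm
  refine ⟨Φ, ?_, ?_⟩
  · intro A F
    rw [hPhi, hcoordA, hthetaA, hPhi]
  · intro v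
    have h1 : coordL (TensorProduct.mk k Q Y v) = fun p => I p • v := by
      funext p
      show φ p.1 (v ⊗ₜ[k] b p.2) = I p • v
      rw [hφ]
      simp only [Basis.repr_self, Finsupp.single_apply, I]
      congr 1
      by_cases h : p.1 = p.2 <;> simp [h, eq_comm]
    have h2 : thetaL (fun p => I p • v)
        = fun r => (if (0 : Fin (m + 1)) = r then (1:k) else 0) • v := by
      funext r
      show (∑ p, D r p • (I p • v)) = _
      calc (∑ p, D r p • (I p • v)) = (∑ p, I p * D r p) • v := by
            rw [Finset.sum_smul]
            refine Finset.sum_congr rfl fun p _ => ?_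
            rw [smul_smul, mul_comm]
        _ = (C.repr I r) • v := by
            congr 1
            conv_rhs => rw [← Ldelta I]
            rw [map_sum, Finset.sum_apply']
            exact Finset.sum_congr rfl fun p _ => by
              rw [map_smul, Finsupp.smul_apply, smul_eq_mul]
        _ = (if (0 : Fin (m + 1)) = r then (1:k) else 0) • v := by
            rw [← hC0, C.repr_self, Finsupp.single_apply]
    rw [hPhi, h1, h2]
    have hzs : ∀ i : Fin m, ((0 : Fin (m + 1)) = i.succ) = False := by
      intro i
      simp [(Fin.succ_ne_zero i).symm]
    simp [hzs]
    rfl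

/-- if the pair `(Q,V)` is tensor `G`-stable by a nonzero finite dimensional
`k[G/N]`-module `Y` (so `Q ⊗ Y` is a `kG`-module extending the `N`-action, with `V ⊗ Y` a
`G`-submodule carrying the tensor-product `G`-structure), then `(Q,V)` is numerically
`G`-stable: with `n = dim(Y ⊗ Y*) = (dim Y)²` there is a `kG`-module `M = Q ⊕ Q^{⊕(n-1)}`
whose restriction to `N` is the diagonal one, and in which the copy `V × 0` of `V` inside the
first summand `Q` is a `G`-submodule with its given `G`-structure. -/
theorem tensor_stable_pair_numerically_stable
    {k : Type*} [Field k] {G : Type*} [Group G]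
    {Q : Type*} [AddCommGroup Q] [Module k Q] [FiniteDimensional k Q]
    (N : Subgroup G) [N.Normal]
    (ρ : ↥N →* (Q →ₗ[k] Q)ˣ)
    (V : Submodule k Q)
    (hVN : ∀ n : ↥N, ∀ v ∈ V, (ρ n).1 v ∈ V)
    (β : G →* (↥V →ₗ[k] ↥V)ˣ)
    (hβN : ∀ (n : ↥N) (v : ↥V), ((β ↑n).1 v : Q) = (ρ n).1 ↑v)
    (Y : Type*) [AddCommGroup Y] [Module k Y] [FiniteDimensional k Y] [Nontrivial Y]
    (σ : (G ⧸ N) →* (Y →ₗ[k] Y)ˣ)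
    (τ : G →* ((Q ⊗[k] Y) →ₗ[k] (Q ⊗[k] Y))ˣ)
    (hτN : ∀ (n : ↥N) (q : Q) (y : Y), (τ ↑n).1 (q ⊗ₜ[k] y) = ((ρ n).1 q) ⊗ₜ[k] y)
    (hW : ∀ g : G, ∀ x ∈ LinearMap.range
        (TensorProduct.map V.subtype (LinearMap.id (R := k) (M := Y))),
      (τ g).1 x ∈ LinearMap.range
        (TensorProduct.map V.subtype (LinearMap.id (R := k) (M := Y))))
    (hτV : ∀ (g : G) (v : ↥V) (y : Y),
      (τ g).1 ((v : Q) ⊗ₜ[k] y) = (((β g).1 v : Q)) ⊗ₜ[k] ((σ (g : G ⧸ N)).1 y)) :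
    ∃ π : G →* ((Q × (Fin (Module.finrank k Y * Module.finrank k Y - 1) → Q)) →ₗ[k]
        (Q × (Fin (Module.finrank k Y * Module.finrank k Y - 1) → Q)))ˣ,
      (∀ (n : ↥N) (p : Q × (Fin (Module.finrank k Y * Module.finrank k Y - 1) → Q)),
        (π ↑n).1 p = ((ρ n).1 p.1, fun i => (ρ n).1 (p.2 i))) ∧
      (∀ (g : G) (v : ↥V), (π g).1 ((v : Q), 0) = (((β g).1 v : Q), 0)) := by
  classical
  obtain ⟨Φ, hΦA, hΦmk⟩ := exists_good_equiv k Q Y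
  -- the action of `G` on `Hom(Y, Q ⊗ Y)` by `F ↦ τ(g) ∘ F ∘ σ(ḡ)⁻¹`
  let πW : G →* ((Y →ₗ[k] Q ⊗[k] Y) →ₗ[k] (Y →ₗ[k] Q ⊗[k] Y))ˣ :=
    { toFun := fun g =>
        { val := compL (τ g).1 (↑(σ ((g : G) : G ⧸ N))⁻¹ : Y →ₗ[k] Y)
          inv := compL (↑(τ g)⁻¹ : (Q ⊗[k] Y) →ₗ[k] (Q ⊗[k] Y)) (σ ((g : G) : G ⧸ N)).1
          val_inv := by
            refine LinearMap.ext fun F => LinearMap.ext fun y => ?_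
            show (τ g).1 ((↑(τ g)⁻¹ : (Q ⊗[k] Y) →ₗ[k] (Q ⊗[k] Y))
              (F ((σ ((g : G) : G ⧸ N)).1 ((↑(σ ((g : G) : G ⧸ N))⁻¹ : Y →ₗ[k] Y) y)))) = F y
            rw [unit_apply_inv_apply, unit_apply_inv_apply]
          inv_val := by
            refine LinearMap.ext fun F => LinearMap.ext fun y => ?_
            show (↑(τ g)⁻¹ : (Q ⊗[k] Y) →ₗ[k] (Q ⊗[k] Y))
              ((τ g).1 (F ((↑(σ ((g : G) : G ⧸ N))⁻¹ : Y →ₗ[k] Y)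
                ((σ ((g : G) : G ⧸ N)).1 y)))) = F y
            rw [unit_inv_apply_apply, unit_inv_apply_apply] }
      map_one' := by
        refine Units.ext (LinearMap.ext fun F => LinearMap.ext fun y => ?_)
        show (τ 1).1 (F ((↑(σ ((1 : G) : G ⧸ N))⁻¹ : Y →ₗ[k] Y) y)) = F y
        simp
      map_mul' := fun g h => by
        refine Units.ext (LinearMap.ext fun F => LinearMap.ext fun y => ?_)
        show (τ (g * h)).1 (F ((↑(σ ((g * h : G) : G ⧸ N))⁻¹ : Y →ₗ[k] Y) y))
          = (τ g).1 ((τ h).1 (F ((↑(σ ((h : G) : G ⧸ N))⁻¹ : Y →ₗ[k] Y)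
              ((↑(σ ((g : G) : G ⧸ N))⁻¹ : Y →ₗ[k] Y) y))))
        simp [map_mul, mul_inv_rev, Units.val_mul, Module.End.mul_apply] }
  refine ⟨(conjUnits Φ).comp πW, ?_, ?_⟩
  · intro n p
    have hσn : σ ((n : G) : G ⧸ N) = 1 := by
      rw [(QuotientGroup.eq_one_iff (n : G)).2 n.2, map_one]
    have hτn : (τ (n : G)).1 = (ρ n).1.rTensor Y := by
      apply TensorProduct.ext'
      intro q y
      rw [hτN n q y, LinearMap.rTensor_tmul]
    have h0 : (((conjUnits Φ).comp πW) (n : G)).1 p = Φ ((πW (n : G)).1 (Φ.symm p)) := rfl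
    rw [h0]
    have h1 : (πW (n : G)).1 (Φ.symm p) = ((ρ n).1.rTensor Y) ∘ₗ (Φ.symm p) := by
      refine LinearMap.ext fun y => ?_
      show (τ (n : G)).1 ((Φ.symm p) ((↑(σ ((n : G) : G ⧸ N))⁻¹ : Y →ₗ[k] Y) y)) = _
      rw [hσn, hτn]
      simp
    rw [h1, hΦA, Φ.apply_symm_apply]
  · intro g v
    have hmkv : Φ.symm ((v : Q), 0) = TensorProduct.mk k Q Y (v : Q) := by
      rw [LinearEquiv.symm_apply_eq]
      exact (hΦmk (v : Q)).symm
    have h0 : (((conjUnits Φ).comp πW) g).1 ((v : Q), 0)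
        = Φ ((πW g).1 (Φ.symm ((v : Q), 0))) := rfl
    rw [h0, hmkv]
    have hg : (πW g).1 (TensorProduct.mk k Q Y (v : Q))
        = TensorProduct.mk k Q Y (((β g).1 v : Q)) := by
      refine LinearMap.ext fun y => ?_
      show (τ g).1 ((v : Q) ⊗ₜ[k] ((↑(σ ((g : G) : G ⧸ N))⁻¹ : Y →ₗ[k] Y) y))
        = ((β g).1 v : Q) ⊗ₜ[k] y
      rw [hτV g v _, unit_apply_inv_apply]
    rw [hg, hΦmk]
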